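/- arXiv:gr-qc/0407017 — 3 statements merged into one kernel-verified Lean document; each statement's English description precedes it below -/
import Mathlib

section
/- Let A, B be traceless anti-Hermitian 2×2 complex matrices (elements of su(2)) with tr(AB) = 0, and set g := exp(A), h := exp(B). Then g·h = h·g + h⁻¹·g + h·g⁻¹ − tr(h·g)·𝟙. -/
open Matrix

noncomputable section

open NormedSpace in
lemma summable_aux' (d : ℂ) (j : ℕ) :
    Summable fun k : ℕ => ((Nat.factorial (2 * k + j) : ℂ))⁻¹ * d ^ k := by
  refine Summable.of_norm ?_
  refine (Real.summable_pow_div_factorial ‖d‖).of_nonneg_of_le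
    (fun k => norm_nonneg _) (fun k => ?_)
  rw [norm_mul, norm_inv, norm_pow]
  have h1 : (Nat.factorial k : ℝ) ≤ (Nat.factorial (2 * k + j) : ℝ) := by
    exact_mod_cast Nat.factorial_le (by omega)
  have h3 : ‖(Nat.factorial (2 * k + j) : ℂ)‖ = (Nat.factorial (2 * k + j) : ℝ) := by simp
  rw [h3, div_eq_mul_inv, mul_comm]
  have h2 : (0 : ℝ) < (Nat.factorial k : ℝ) := by positivity
  gcongr

set_option maxHeartbeats 1000000 in
open NormedSpace in
lemma exp_of_sq (A : Matrix (Fin 2) (Fin 2) ℂ) (d : ℂ) (hd : A * A = d • 1) :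
    exp A = (∑' k : ℕ, ((Nat.factorial (2 * k) : ℂ))⁻¹ * d ^ k) • (1 : Matrix (Fin 2) (Fin 2) ℂ)
      + (∑' k : ℕ, ((Nat.factorial (2 * k + 1) : ℂ))⁻¹ * d ^ k) • A := by
  have hpow_even : ∀ k : ℕ, A ^ (2 * k) = d ^ k • (1 : Matrix (Fin 2) (Fin 2) ℂ) := by
    intro k
    induction k with
    | zero => simp
    | succ n ih =>
      have h2 : 2 * (n + 1) = 2 * n + 2 := by ring
      rw [h2, pow_add, ih, pow_two, hd, smul_mul_assoc, one_mul, smul_smul, pow_succ]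
  have hpow_odd : ∀ k : ℕ, A ^ (2 * k + 1) = d ^ k • A := by
    intro k
    rw [pow_succ, hpow_even, smul_mul_assoc, one_mul]
  have he : Summable fun k : ℕ => ((Nat.factorial (2 * k) : ℂ))⁻¹ • A ^ (2 * k) := by
    have hsum := (summable_aux' d 0).smul_const (1 : Matrix (Fin 2) (Fin 2) ℂ)
    simp only [Nat.add_zero] at hsum
    refine hsum.congr fun k => ?_
    rw [hpow_even, smul_smul]
  have ho : Summable fun k : ℕ => ((Nat.factorial (2 * k + 1) : ℂ))⁻¹ • A ^ (2 * k + 1) := by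
    have hsum := (summable_aux' d 1).smul_const A
    refine hsum.congr fun k => ?_
    rw [hpow_odd, smul_smul]
  rw [exp_eq_tsum ℂ]
  beta_reduce
  rw [← tsum_even_add_odd (f := fun n : ℕ => ((Nat.factorial n : ℂ))⁻¹ • A ^ n) he ho]
  congr 1
  · have h0 := summable_aux' d 0
    simp only [Nat.add_zero] at h0
    rw [← h0.tsum_smul_const]
    refine tsum_congr fun k => ?_
    rw [hpow_even, smul_smul]
  · rw [← (summable_aux' d 1).tsum_smul_const]
    refine tsum_congr fun k => ?_
    rw [hpow_odd, smul_smul]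

lemma sq_of_traceless (A : Matrix (Fin 2) (Fin 2) ℂ) (hA' : A.trace = 0) :
    A * A = (-A.det) • (1 : Matrix (Fin 2) (Fin 2) ℂ) := by
  rw [Matrix.trace_fin_two] at hA'
  ext i j
  fin_cases i <;> fin_cases j <;>
    simp [Matrix.mul_apply, Fin.sum_univ_two, Matrix.det_fin_two, Matrix.one_apply]
  · linear_combination A 0 0 * hA'
  · linear_combination A 0 1 * hA'
  · linear_combination A 1 0 * hA'
  · linear_combination A 1 1 * hA'

lemma anticomm_of_traces (A B : Matrix (Fin 2) (Fin 2) ℂ)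
    (hA' : A.trace = 0) (hB' : B.trace = 0) (hAB : (A * B).trace = 0) :
    B * A = -(A * B) := by
  rw [Matrix.trace_fin_two] at hA' hB'
  rw [Matrix.trace_fin_two, Matrix.mul_apply, Matrix.mul_apply, Fin.sum_univ_two,
    Fin.sum_univ_two] at hAB
  ext i j
  fin_cases i <;> fin_cases j <;>
    simp [Matrix.mul_apply, Fin.sum_univ_two, Matrix.neg_apply]
  · linear_combination hAB + A 0 0 * hB' - B 1 1 * hA'
  · linear_combination A 0 1 * hB' + B 0 1 * hA'
  · linear_combination A 1 0 * hB' + B 1 0 * hA'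
  · linear_combination hAB + A 1 1 * hB' - B 0 0 * hA'

/-- Lemma 1 of the paper: for A, B ∈ su(2) with tr(AB) = 0 and g = exp A, h = exp B,
one has g h = h g + h⁻¹ g + h g⁻¹ − tr(hg) 𝟙. -/
theorem holonomy_almost_commute (A B : Matrix (Fin 2) (Fin 2) ℂ)
    (hA : Aᴴ = -A) (hA' : A.trace = 0) (hB : Bᴴ = -B) (hB' : B.trace = 0)
    (hAB : (A * B).trace = 0)
    (g h : Matrix (Fin 2) (Fin 2) ℂ)
    (hg : g = NormedSpace.exp A) (hh : h = NormedSpace.exp B) :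
    g * h = h * g + h⁻¹ * g + h * g⁻¹ - (h * g).trace • (1 : Matrix (Fin 2) (Fin 2) ℂ) := by
  have hdA : A * A = (-A.det) • (1 : Matrix (Fin 2) (Fin 2) ℂ) := sq_of_traceless A hA'
  have hdB : B * B = (-B.det) • (1 : Matrix (Fin 2) (Fin 2) ℂ) := sq_of_traceless B hB'
  set c : ℂ := ∑' k : ℕ, ((Nat.factorial (2 * k) : ℂ))⁻¹ * (-A.det) ^ k with hc
  set s : ℂ := ∑' k : ℕ, ((Nat.factorial (2 * k + 1) : ℂ))⁻¹ * (-A.det) ^ k with hs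
  set e : ℂ := ∑' k : ℕ, ((Nat.factorial (2 * k) : ℂ))⁻¹ * (-B.det) ^ k with he
  set t : ℂ := ∑' k : ℕ, ((Nat.factorial (2 * k + 1) : ℂ))⁻¹ * (-B.det) ^ k with ht
  have hgexp : g = c • 1 + s • A := by rw [hg, exp_of_sq A _ hdA]
  have hhexp : h = e • 1 + t • B := by rw [hh, exp_of_sq B _ hdB]
  have hginv : g⁻¹ = c • 1 - s • A := by
    rw [hg, ← Matrix.exp_neg]
    have hdA' : (-A) * (-A) = (-A.det) • (1 : Matrix (Fin 2) (Fin 2) ℂ) := by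
      rw [neg_mul_neg, hdA]
    rw [exp_of_sq (-A) _ hdA', smul_neg, ← sub_eq_add_neg]
  have hhinv : h⁻¹ = e • 1 - t • B := by
    rw [hh, ← Matrix.exp_neg]
    have hdB' : (-B) * (-B) = (-B.det) • (1 : Matrix (Fin 2) (Fin 2) ℂ) := by
      rw [neg_mul_neg, hdB]
    rw [exp_of_sq (-B) _ hdB', smul_neg, ← sub_eq_add_neg]
  have hBA : B * A = -(A * B) := anticomm_of_traces A B hA' hB' hAB
  have hBAtr : (B * A).trace = 0 := by rw [Matrix.trace_mul_comm]; exact hAB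
  have htr : (h * g).trace = 2 * (e * c) := by
    rw [hhexp, hgexp]
    simp only [add_mul, mul_add, smul_mul_assoc, mul_smul_comm, one_mul, mul_one,
      Matrix.trace_add, Matrix.trace_smul, smul_smul, smul_eq_mul,
      hA', hB', hBAtr, Matrix.trace_one, mul_zero]
    simp [Fintype.card_fin]
    ring
  rw [hginv, hhinv, htr, hgexp, hhexp]
  simp only [add_mul, mul_add, sub_mul, mul_sub, smul_mul_assoc, mul_smul_comm,
    one_mul, mul_one, smul_smul, hBA, smul_neg]
  module

end
end

section
/- With A = a·τ_1 and B = b·τ_2 for real a, b (so tr(AB) = 0), the product of holonomies satisfies exp(a τ_1)·exp(b τ_2) = exp(b τ_2)·exp(a τ_1) + exp(-b τ_2)·exp(a τ_1) + exp(b τ_2)·exp(-a τ_1) − tr(exp(b τ_2)·exp(a τ_1))·𝟙. -/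
open Matrix

noncomputable section

/-- The Pauli matrices. -/
def σ : Fin 3 → Matrix (Fin 2) (Fin 2) ℂ
  | 0 => !![0, 1; 1, 0]
  | 1 => !![0, -Complex.I; Complex.I, 0]
  | 2 => !![1, 0; 0, -1]

/-- The su(2) basis matrices τ_i = -(i/2) σ_i. -/
def τ (i : Fin 3) : Matrix (Fin 2) (Fin 2) ℂ := (-(Complex.I / 2)) • σ i

lemma sigma_sq (i : Fin 3) :
    ((-Complex.I) • σ i) * ((-Complex.I) • σ i) = -1 := by
  fin_cases i <;>
  · ext x y
    fin_cases x <;> fin_cases y <;>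
      simp [σ, Matrix.mul_apply, Fin.sum_univ_succ, Complex.ext_iff]

lemma exp_smul_tau (c : ℝ) (i : Fin 3) :
    NormedSpace.exp ((c : ℂ) • τ i) =
      (Real.cos (c / 2) : ℂ) • (1 : Matrix (Fin 2) (Fin 2) ℂ)
        + (Real.sin (c / 2) : ℂ) • ((-Complex.I) • σ i) := by
  letI : SeminormedRing (Matrix (Fin 2) (Fin 2) ℂ) := Matrix.linftyOpSemiNormedRing
  letI : NormedRing (Matrix (Fin 2) (Fin 2) ℂ) := Matrix.linftyOpNormedRing
  letI : NormedAlgebra ℝ (Matrix (Fin 2) (Fin 2) ℂ) := Matrix.linftyOpNormedAlgebra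
  letI : NormedAlgebra ℂ (Matrix (Fin 2) (Fin 2) ℂ) := Matrix.linftyOpNormedAlgebra
  set J : Matrix (Fin 2) (Fin 2) ℂ := (-Complex.I) • σ i with hJ
  have hJ2 : J * J = -1 := sigma_sq i
  let φ : ℂ →ₐ[ℝ] Matrix (Fin 2) (Fin 2) ℂ := Complex.liftAux J hJ2
  have hcont : Continuous φ := φ.toLinearMap.continuous_of_finiteDimensional
  have harg : (c : ℂ) • τ i = φ (((c / 2 : ℝ) : ℂ) * Complex.I) := by
    rw [Complex.liftAux_apply]
    ext x y
    simp [τ, hJ, Complex.ext_iff, Complex.real_smul, Algebra.algebraMap_eq_smul_one]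
    constructor <;> ring
  rw [harg]
  erw [← NormedSpace.map_exp φ hcont]
  rw [← Complex.exp_eq_exp_ℂ, Complex.exp_mul_I,
    Complex.liftAux_apply]
  have h1 : (Complex.cos ((c/2 : ℝ) : ℂ) + Complex.sin ((c/2 : ℝ) : ℂ) * Complex.I).re
      = Real.cos (c/2) := by
    rw [Complex.add_re, Complex.cos_ofReal_re, Complex.mul_re, Complex.I_re, Complex.I_im,
      Complex.sin_ofReal_im]
    ring
  have h2 : (Complex.cos ((c/2 : ℝ) : ℂ) + Complex.sin ((c/2 : ℝ) : ℂ) * Complex.I).im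
      = Real.sin (c/2) := by
    rw [Complex.add_im, Complex.cos_ofReal_im, Complex.mul_im, Complex.I_re, Complex.I_im,
      Complex.sin_ofReal_re]
    ring
  rw [h1, h2, Algebra.algebraMap_eq_smul_one, Complex.coe_smul, Complex.coe_smul]

/-- Explicit special case of Lemma 1: with A = a τ_1, B = b τ_2,
exp(a τ₁) exp(b τ₂) = exp(b τ₂) exp(a τ₁) + exp(−b τ₂) exp(a τ₁) + exp(b τ₂) exp(−a τ₁)
  − tr(exp(b τ₂) exp(a τ₁)) 𝟙. -/
theorem holonomy_almost_commute_explicit (a b : ℝ) :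
    NormedSpace.exp ((a : ℂ) • τ 0) * NormedSpace.exp ((b : ℂ) • τ 1) =
      NormedSpace.exp ((b : ℂ) • τ 1) * NormedSpace.exp ((a : ℂ) • τ 0)
      + NormedSpace.exp ((-b : ℂ) • τ 1) * NormedSpace.exp ((a : ℂ) • τ 0)
      + NormedSpace.exp ((b : ℂ) • τ 1) * NormedSpace.exp ((-a : ℂ) • τ 0)
      - (NormedSpace.exp ((b : ℂ) • τ 1) * NormedSpace.exp ((a : ℂ) • τ 0)).trace
          • (1 : Matrix (Fin 2) (Fin 2) ℂ) := by
  have h0 : ∀ c : ℝ, NormedSpace.exp ((c : ℂ) • τ 0) =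
      !![(Real.cos (c/2) : ℂ), -Complex.I * Real.sin (c/2);
         -Complex.I * Real.sin (c/2), (Real.cos (c/2) : ℂ)] := by
    intro c
    rw [exp_smul_tau c 0]
    ext x y
    fin_cases x <;> fin_cases y <;> simp [σ] <;> ring
  have h1 : ∀ c : ℝ, NormedSpace.exp ((c : ℂ) • τ 1) =
      !![(Real.cos (c/2) : ℂ), -(Real.sin (c/2) : ℂ);
         (Real.sin (c/2) : ℂ), (Real.cos (c/2) : ℂ)] := by
    intro c
    rw [exp_smul_tau c 1]
    ext x y
    fin_cases x <;> fin_cases y <;> simp [σ, Complex.ext_iff] <;> ring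
  have hna : ((-a : ℝ) : ℂ) = ((-a : ℝ) : ℂ) := rfl
  rw [show ((-a : ℂ)) = (((-a : ℝ) : ℂ)) by push_cast; ring,
      show ((-b : ℂ)) = (((-b : ℝ) : ℂ)) by push_cast; ring,
      h0 a, h0 (-a), h1 b, h1 (-b)]
  rw [show (-a)/2 = -(a/2) by ring, show (-b)/2 = -(b/2) by ring,
      Real.cos_neg, Real.sin_neg, Real.cos_neg, Real.sin_neg]
  ext x y
  fin_cases x <;> fin_cases y <;>
    simp [Matrix.mul_apply, Matrix.trace, Fin.sum_univ_succ, Matrix.diag] <;> push_cast <;> ring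
end
end

section
/- For any traceless anti-Hermitian 2×2 matrices A, B with tr(AB)=0, there exists U ∈ SU(2) and real numbers a, b such that U·A·U⁻¹ = a·τ_1 and U·B·U⁻¹ = b·τ_2. -/
open Matrix
noncomputable section

lemma diag_su2 (A : Matrix (Fin 2) (Fin 2) ℂ) (hA : Aᴴ = -A) (hA' : A.trace = 0) :
    ∃ U : Matrix (Fin 2) (Fin 2) ℂ, Uᴴ * U = 1 ∧ U * Uᴴ = 1 ∧ U.det = 1 ∧
      ∃ c : ℝ, U * A * Uᴴ = (c : ℂ) • τ 2 := by
  set H : Matrix (Fin 2) (Fin 2) ℂ := Complex.I • A with hHdef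
  have hH : H.IsHermitian := by
    unfold Matrix.IsHermitian
    rw [hHdef, conjTranspose_smul, hA]
    simp [Complex.star_def, Complex.conj_I]
  set V : Matrix (Fin 2) (Fin 2) ℂ := (hH.eigenvectorUnitary : Matrix (Fin 2) (Fin 2) ℂ) with hVdef
  have h1 : star V * V = 1 := Matrix.mem_unitaryGroup_iff'.mp hH.eigenvectorUnitary.2
  have h2 : V * star V = 1 := Matrix.mem_unitaryGroup_iff.mp hH.eigenvectorUnitary.2
  have hdiag : star V * H * V = diagonal (RCLike.ofReal ∘ hH.eigenvalues) :=
    by have := hH.conjStarAlgAut_star_eigenvectorUnitary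
       rwa [Unitary.conjStarAlgAut_star_apply] at this
  have htrH : H.trace = 0 := by rw [hHdef, trace_smul, hA']; simp
  have htr : (hH.eigenvalues 0 : ℂ) + (hH.eigenvalues 1 : ℂ) = 0 := by
    have := congrArg Matrix.trace hdiag
    rw [Matrix.trace_mul_cycle, h2, one_mul, htrH] at this
    simpa [Matrix.trace_diagonal, Fin.sum_univ_two] using this.symm
  have hsum : hH.eigenvalues 1 = -hH.eigenvalues 0 := by
    have : (hH.eigenvalues 0 : ℝ) + hH.eigenvalues 1 = 0 := by exact_mod_cast htr
    linarith
  have hconj : star V * A * V = ((2 * hH.eigenvalues 0 : ℝ) : ℂ) • τ 2 := by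
    have hAH : A = (-Complex.I) • H := by
      rw [hHdef, smul_smul]; simp [Complex.I_mul_I]
    rw [hAH, Matrix.mul_smul, Matrix.smul_mul, hdiag]
    ext i j
    fin_cases i <;> fin_cases j <;>
      simp [τ, σ, Matrix.diagonal, hsum, Complex.ext_iff] <;> ring
  -- fix the determinant
  set d : ℂ := V.det with hddef
  have hdd : d * (starRingEnd ℂ) d = 1 := by
    have := congrArg Matrix.det h2
    rw [Matrix.det_mul, Matrix.star_eq_conjTranspose, Matrix.det_conjTranspose,
      Matrix.det_one] at this
    rwa [Complex.star_def] at this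
  set D : Matrix (Fin 2) (Fin 2) ℂ := diagonal ![d, 1] with hDdef
  have hVH : (star V)ᴴ = V := by
    rw [← Matrix.star_eq_conjTranspose]; exact star_star V
  have hDH : Dᴴ = diagonal ![star d, 1] := by
    ext i j; fin_cases i <;> fin_cases j <;> simp [hDdef, Matrix.diagonal]
  refine ⟨D * star V, ?_, ?_, ?_, 2 * hH.eigenvalues 0, ?_⟩
  · rw [Matrix.conjTranspose_mul, hVH, mul_assoc,
      ← mul_assoc Dᴴ, hDH, hDdef]
    have : diagonal ![star d, 1] * diagonal ![d, 1] = (1 : Matrix (Fin 2) (Fin 2) ℂ) := by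
      ext i j; fin_cases i <;> fin_cases j <;>
        simp [Matrix.mul_apply, Fin.sum_univ_two, Matrix.diagonal] <;>
        linear_combination hdd
    rw [this, one_mul, h2]
  · rw [Matrix.conjTranspose_mul, hVH, mul_assoc,
      ← mul_assoc (star V), h1, one_mul, hDH, hDdef]
    ext i j; fin_cases i <;> fin_cases j <;>
      simp [Matrix.mul_apply, Fin.sum_univ_two, Matrix.diagonal] <;>
      linear_combination hdd
  · rw [Matrix.det_mul, hDdef, Matrix.det_diagonal, Matrix.star_eq_conjTranspose,
      Matrix.det_conjTranspose, Fin.prod_univ_two]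
    simpa using hdd
  · rw [Matrix.conjTranspose_mul, hVH, hDH]
    calc D * star V * A * (V * diagonal ![star d, 1])
        = D * (star V * A * V) * diagonal ![star d, 1] := by simp only [mul_assoc]
      _ = D * (((2 * hH.eigenvalues 0 : ℝ) : ℂ) • τ 2) * diagonal ![star d, 1] := by rw [hconj]
      _ = ((2 * hH.eigenvalues 0 : ℝ) : ℂ) • (D * τ 2 * diagonal ![star d, 1]) := by
          rw [Matrix.mul_smul, Matrix.smul_mul]
      _ = ((2 * hH.eigenvalues 0 : ℝ) : ℂ) • τ 2 := by
          congr 1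
          ext i j; fin_cases i <;> fin_cases j <;>
            simp [hDdef, Matrix.diagonal, τ, σ, Matrix.mul_apply, Fin.sum_univ_two] <;>
            first
              | rfl
              | linear_combination hdd
              | linear_combination Complex.I * hdd
              | linear_combination (-Complex.I) * hdd
              | linear_combination (Complex.I/2) * hdd
              | linear_combination (-(Complex.I/2)) * hdd

lemma unitary_cancel {P X : Matrix (Fin 2) (Fin 2) ℂ} (h : Pᴴ * P = 1) :
    Pᴴ * (P * X) = X := by rw [← mul_assoc, h, one_mul]

lemma unitary_cancel' {P X : Matrix (Fin 2) (Fin 2) ℂ} (h : P * Pᴴ = 1) :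
    P * (Pᴴ * X) = X := by rw [← mul_assoc, h, one_mul]

/-- scaling factor 1/√2 -/
def rt : ℂ := ((Real.sqrt 2 : ℝ) : ℂ)⁻¹

lemma rt_star : (starRingEnd ℂ) rt = rt := by
  rw [rt, ← Complex.ofReal_inv, Complex.conj_ofReal]

lemma rt_sq : rt * rt = 2⁻¹ := by
  rw [rt, ← mul_inv, ← Complex.ofReal_mul, Real.mul_self_sqrt (by norm_num)]
  norm_num

def M1 : Matrix (Fin 2) (Fin 2) ℂ := !![1, -1; 1, 1]
def M2 : Matrix (Fin 2) (Fin 2) ℂ := !![1, Complex.I; Complex.I, 1]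
def V1 : Matrix (Fin 2) (Fin 2) ℂ := rt • M1
def V2 : Matrix (Fin 2) (Fin 2) ℂ := rt • M2

lemma smul_conj (M X Y : Matrix (Fin 2) (Fin 2) ℂ) (h : M * X * Mᴴ = (2 : ℂ) • Y) :
    (rt • M) * X * (rt • M)ᴴ = Y := by
  rw [Matrix.conjTranspose_smul, Complex.star_def, rt_star, Matrix.smul_mul, Matrix.smul_mul,
    Matrix.mul_smul, smul_smul, rt_sq, h, smul_smul]
  norm_num

lemma smul_unit (M : Matrix (Fin 2) (Fin 2) ℂ) (h : Mᴴ * M = (2 : ℂ) • 1)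
    (h' : M * Mᴴ = (2 : ℂ) • 1) :
    (rt • M)ᴴ * (rt • M) = 1 ∧ (rt • M) * (rt • M)ᴴ = 1 := by
  constructor <;>
  · rw [Matrix.conjTranspose_smul, Complex.star_def, rt_star, Matrix.smul_mul, Matrix.mul_smul,
      smul_smul, rt_sq]
    first
      | rw [h, smul_smul]; norm_num
      | rw [h', smul_smul]; norm_num

lemma smul_det (M : Matrix (Fin 2) (Fin 2) ℂ) (h : M.det = 2) : (rt • M).det = 1 := by
  rw [Matrix.det_smul, h]
  simp only [Fintype.card_fin]
  rw [pow_two, rt_sq]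
  norm_num

lemma V1_unit : V1ᴴ * V1 = 1 ∧ V1 * V1ᴴ = 1 := by
  apply smul_unit <;>
  · ext i j; fin_cases i <;> fin_cases j <;>
      simp [M1, Matrix.mul_apply, Fin.sum_univ_two, Matrix.conjTranspose_apply] <;> ring

lemma V2_unit : V2ᴴ * V2 = 1 ∧ V2 * V2ᴴ = 1 := by
  apply smul_unit <;>
  · ext i j; fin_cases i <;> fin_cases j <;>
      simp [M2, Matrix.mul_apply, Fin.sum_univ_two, Matrix.conjTranspose_apply,
        Complex.ext_iff] <;> ring

lemma V1_det : V1.det = 1 := smul_det _ (by simp [M1, Matrix.det_fin_two_of]; ring)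

lemma V2_det : V2.det = 1 := smul_det _ (by
  simp [M2, Matrix.det_fin_two_of, Complex.I_mul_I]; ring)

lemma V1_tau2 : V1 * τ 2 * V1ᴴ = τ 0 := by
  apply smul_conj
  ext i j; fin_cases i <;> fin_cases j <;>
    simp [M1, τ, σ, Matrix.mul_apply, Fin.sum_univ_two, Matrix.conjTranspose_apply,
      Complex.ext_iff] <;> ring

lemma V1_tau1 : V1 * τ 1 * V1ᴴ = τ 1 := by
  apply smul_conj
  ext i j; fin_cases i <;> fin_cases j <;>
    simp [M1, τ, σ, Matrix.mul_apply, Fin.sum_univ_two, Matrix.conjTranspose_apply,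
      Complex.ext_iff] <;> ring

lemma V2_tau2 : V2 * τ 2 * V2ᴴ = τ 1 := by
  apply smul_conj
  ext i j; fin_cases i <;> fin_cases j <;>
    simp [M2, τ, σ, Matrix.mul_apply, Fin.sum_univ_two, Matrix.conjTranspose_apply,
      Complex.ext_iff] <;> ring

/-- Any two perpendicular elements of su(2) can be simultaneously rotated by an SU(2)
conjugation to multiples of τ₁ and τ₂. -/
theorem conj_to_tau1_tau2 (A B : Matrix (Fin 2) (Fin 2) ℂ)
    (hA : Aᴴ = -A) (hA' : A.trace = 0) (hB : Bᴴ = -B) (hB' : B.trace = 0)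
    (hAB : (A * B).trace = 0) :
    ∃ U : Matrix (Fin 2) (Fin 2) ℂ, Uᴴ * U = 1 ∧ U.det = 1 ∧
      ∃ a b : ℝ, U * A * U⁻¹ = (a : ℂ) • τ 0 ∧ U * B * U⁻¹ = (b : ℂ) • τ 1 := by
  obtain ⟨hV1, hV1'⟩ := V1_unit
  obtain ⟨hV2, hV2'⟩ := V2_unit
  by_cases h0 : A = 0
  · -- A = 0 : diagonalize B and rotate z-axis to y-axis
    obtain ⟨U, hU, hU', hUdet, c, hUB⟩ := diag_su2 B hB hB'
    set W : Matrix (Fin 2) (Fin 2) ℂ := V2 * U with hWdef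
    have hWW : Wᴴ * W = 1 := by
      rw [hWdef, Matrix.conjTranspose_mul, mul_assoc, ← mul_assoc V2ᴴ, hV2, one_mul, hU]
    have hWW' : W * Wᴴ = 1 := by
      rw [hWdef, Matrix.conjTranspose_mul, mul_assoc, ← mul_assoc U, hU', one_mul, hV2']
    have hinv : W⁻¹ = Wᴴ := Matrix.inv_eq_right_inv hWW'
    refine ⟨W, hWW, by rw [hWdef, Matrix.det_mul, V2_det, hUdet, one_mul], 0, c, ?_, ?_⟩
    · rw [h0, hinv]; simp
    · rw [hinv, hWdef, Matrix.conjTranspose_mul]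
      calc V2 * U * B * (Uᴴ * V2ᴴ) = V2 * (U * B * Uᴴ) * V2ᴴ := by
            simp only [mul_assoc]
        _ = (c : ℂ) • (V2 * τ 2 * V2ᴴ) := by
            rw [hUB, Matrix.mul_smul, Matrix.smul_mul]
        _ = (c : ℂ) • τ 1 := by rw [V2_tau2]
  · -- A ≠ 0
    obtain ⟨U, hU, hU', hUdet, c, hUA⟩ := diag_su2 A hA hA'
    have hc : (c : ℂ) ≠ 0 := by
      intro h
      apply h0
      have : U * A * Uᴴ = 0 := by rw [hUA, h, zero_smul]
      calc A = (Uᴴ * U) * A * (Uᴴ * U) := by rw [hU]; simp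
        _ = Uᴴ * (U * A * Uᴴ) * U := by simp only [mul_assoc]
        _ = 0 := by rw [this]; simp
    set B' : Matrix (Fin 2) (Fin 2) ℂ := U * B * Uᴴ with hB'def
    have hB'h : B'ᴴ = -B' := by
      rw [hB'def]
      simp only [Matrix.conjTranspose_mul, Matrix.conjTranspose_conjTranspose, hB]
      simp [Matrix.mul_assoc]
    have hB'tr : B'.trace = 0 := by
      rw [hB'def, Matrix.trace_mul_cycle, hU, one_mul, hB']
    have hAB2 : (((c : ℂ) • τ 2) * B').trace = 0 := by
      rw [← hUA, hB'def]
      have : U * A * Uᴴ * (U * B * Uᴴ) = U * (A * B) * Uᴴ := by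
        calc U * A * Uᴴ * (U * B * Uᴴ) = U * A * (Uᴴ * U) * B * Uᴴ := by
              simp only [mul_assoc]
          _ = U * (A * B) * Uᴴ := by rw [hU]; simp only [mul_one, mul_assoc]
      rw [this, Matrix.trace_mul_cycle, ← mul_assoc, hU, one_mul, hAB]
    -- extract entry structure of B'
    have t1 : B' 0 0 + B' 1 1 = 0 := by
      have := hB'tr; rwa [Matrix.trace_fin_two] at this
    have t2 : B' 0 0 = B' 1 1 := by
      have h := hAB2
      rw [Matrix.trace_fin_two] at h
      simp [Matrix.mul_apply, Fin.sum_univ_two, τ, σ] at h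
      have hI : (Complex.I / 2) * (c : ℂ) ≠ 0 := by
        simp [Complex.I_ne_zero, hc]
      field_simp at h
      -- h should now give a linear relation
      have : (c : ℂ) * Complex.I * (B' 1 1 - B' 0 0) = 0 := by linear_combination h
      rcases mul_eq_zero.mp this with h' | h'
      · exact absurd (mul_eq_zero.mp h') (by simp [hc, Complex.I_ne_zero])
      · linear_combination -h'
    have t00 : B' 0 0 = 0 := by
      have : (2 : ℂ) * B' 0 0 = 0 := by linear_combination t1 + t2
      simpa using this
    have t11 : B' 1 1 = 0 := by rw [← t2]; exact t00
    have t3 : B' 1 0 = -(starRingEnd ℂ) (B' 0 1) := by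
      have := congrFun (congrFun hB'h 0) 1
      simp [Matrix.conjTranspose_apply] at this
      have := congrArg (starRingEnd ℂ) this
      simp at this
      exact this
    set q : ℂ := B' 0 1 with hqdef
    have hB'form : B' = !![0, q; -(starRingEnd ℂ) q, 0] := by
      ext i j
      fin_cases i <;> fin_cases j <;> simp [t00, t11, t3, hqdef]
    clear_value q
    clear_value B'
    -- choose phase u and real r
    obtain ⟨u, r, hu1, hu2⟩ : ∃ (u : ℂ) (r : ℝ), u * (starRingEnd ℂ) u = 1 ∧
        u * u * q = (r : ℂ) := by
      by_cases hq : q = 0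
      · exact ⟨1, 0, by simp, by simp [hq]⟩
      · obtain ⟨u, hu⟩ := Complex.isAlgClosed.exists_pow_nat_eq
          ((starRingEnd ℂ) q / (‖q‖ : ℂ)) (n := 2) (by norm_num)
        have habs : ‖(starRingEnd ℂ) q / (‖q‖ : ℂ)‖ = 1 := by
          rw [norm_div, Complex.norm_conj, Complex.norm_real,
            norm_norm, div_self (by simpa using hq)]
        have habsu : ‖u‖ = 1 := by
          have h2 : ‖u‖ ^ 2 = 1 := by
            rw [← norm_pow, hu, habs]
          nlinarith [norm_nonneg u]
        refine ⟨u, Complex.normSq q / ‖q‖, ?_, ?_⟩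
        · rw [Complex.mul_conj, Complex.normSq_eq_norm_sq, habsu]; norm_num
        · rw [← pow_two, hu]
          push_cast
          rw [div_mul_eq_mul_div, mul_comm ((starRingEnd ℂ) q) q, Complex.mul_conj]
    set D : Matrix (Fin 2) (Fin 2) ℂ := diagonal ![u, (starRingEnd ℂ) u] with hDdef
    have hDH : Dᴴ = diagonal ![(starRingEnd ℂ) u, u] := by
      ext i j; fin_cases i <;> fin_cases j <;> simp [hDdef, Matrix.diagonal]
    have hDD : Dᴴ * D = 1 := by
      rw [hDH]
      ext i j; fin_cases i <;> fin_cases j <;>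
        simp [hDdef, Matrix.mul_apply, Fin.sum_univ_two, Matrix.diagonal] <;>
        linear_combination hu1
    have hDD' : D * Dᴴ = 1 := by
      rw [hDH]
      ext i j; fin_cases i <;> fin_cases j <;>
        simp [hDdef, Matrix.mul_apply, Fin.sum_univ_two, Matrix.diagonal] <;>
        linear_combination hu1
    have hDdet : D.det = 1 := by
      rw [hDdef, Matrix.det_diagonal, Fin.prod_univ_two]
      simpa using hu1
    have hu2' : (starRingEnd ℂ) u * (starRingEnd ℂ) u * (starRingEnd ℂ) q = (r : ℂ) := by
      have := congrArg (starRingEnd ℂ) hu2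
      simpa [_root_.map_mul, Complex.conj_ofReal] using this
    have hDB : D * B' * Dᴴ = ((-(2 * r) : ℝ) : ℂ) • τ 1 := by
      rw [hB'form, hDH]
      ext i j; fin_cases i <;> fin_cases j <;>
        simp [hDdef, Matrix.mul_apply, Fin.sum_univ_two, Matrix.diagonal, τ, σ] <;>
        first
          | linear_combination hu2 - (r : ℂ) * Complex.I_sq
          | linear_combination -hu2' - (r : ℂ) * Complex.I_sq
          | linear_combination -hu2' + (r : ℂ) * Complex.I_sq
          | linear_combination hu2 + (r : ℂ) * Complex.I_sq
          | linear_combination hu2 + hu2' + (r : ℂ) * Complex.I_sq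
          | linear_combination -hu2 - hu2' - (r : ℂ) * Complex.I_sq
          | linear_combination (r : ℂ) * Complex.I_sq
          | linear_combination (-(r : ℂ)) * Complex.I_sq
          | linear_combination hu2
          | linear_combination -hu2
          | linear_combination hu2'
          | linear_combination -hu2'
          | ring
    have hDA : D * ((c : ℂ) • τ 2) * Dᴴ = (c : ℂ) • τ 2 := by
      rw [Matrix.mul_smul, Matrix.smul_mul]
      congr 1
      rw [hDH]
      ext i j; fin_cases i <;> fin_cases j <;>
        simp [hDdef, Matrix.mul_apply, Fin.sum_univ_two, Matrix.diagonal, τ, σ] <;>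
        first
          | linear_combination (Complex.I / 2) * hu1
          | linear_combination (-(Complex.I / 2)) * hu1
    set W : Matrix (Fin 2) (Fin 2) ℂ := V1 * D * U with hWdef2
    have hWW : Wᴴ * W = 1 := by
      have e : Wᴴ * W = Uᴴ * (Dᴴ * (V1ᴴ * (V1 * (D * U)))) := by
        simp only [hWdef2, Matrix.conjTranspose_mul, mul_assoc]
      rw [e, unitary_cancel hV1, unitary_cancel hDD, hU]
    have hWW' : W * Wᴴ = 1 := by
      have e : W * Wᴴ = V1 * (D * (U * (Uᴴ * (Dᴴ * V1ᴴ)))) := by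
        simp only [hWdef2, Matrix.conjTranspose_mul, mul_assoc]
      rw [e, unitary_cancel' hU', unitary_cancel' hDD', hV1']
    have hinv : W⁻¹ = Wᴴ := Matrix.inv_eq_right_inv hWW'
    have hWdet : W.det = 1 := by
      rw [hWdef2, Matrix.det_mul, Matrix.det_mul, V1_det, hDdet, hUdet]
      norm_num
    have hconjA : W * A * Wᴴ = (c : ℂ) • τ 0 := by
      have e : W * A * Wᴴ = V1 * (D * (U * A * Uᴴ) * Dᴴ) * V1ᴴ := by
        simp only [hWdef2, Matrix.conjTranspose_mul, mul_assoc]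
      rw [e, hUA, hDA, Matrix.mul_smul, Matrix.smul_mul, V1_tau2]
    have hconjB : W * B * Wᴴ = ((-(2 * r) : ℝ) : ℂ) • τ 1 := by
      have e : W * B * Wᴴ = V1 * (D * B' * Dᴴ) * V1ᴴ := by
        rw [hB'def]
        simp only [hWdef2, Matrix.conjTranspose_mul, mul_assoc]
      rw [e, hDB, Matrix.mul_smul, Matrix.smul_mul, V1_tau1]
    exact ⟨W, hWW, hWdet, c, -(2 * r), by rw [hinv]; exact hconjA, by rw [hinv]; exact hconjB⟩
end
end
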